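/- Let X be a finitely generated module over the Iwasawa algebra Λ = ℤ_ℓ[[X]] and let T be its largest finite Λ-submodule (T is finite and contains every finite Λ-submodule of X). Then there exists N ∈ ℕ such that for every n ≥ N there exists M(n) ≥ n such that for all m ≥ M(n), the kernel of the Λ-linear map X/ω_n X → X/ω_m X induced by multiplication by ν_{m,n} is exactly (T + ω_n X)/ω_n X. -/

import Mathlib

open PowerSeries Finset

section Noetherian

variable {R : Type*} [CommRing R]

/-- Truncation: `X^K` divides `g` minus its degree-`<K` truncation. -/
lemma ps_trunc_dvd (g : R⟦X⟧) (K : ℕ) :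
    (X : R⟦X⟧) ^ K ∣ g - ∑ e ∈ Finset.range K, PowerSeries.C ((PowerSeries.coeff e) g) * X ^ e := by
  rw [PowerSeries.X_pow_dvd_iff]
  intro m hm
  simp only [map_sub, map_sum, PowerSeries.coeff_C_mul, PowerSeries.coeff_X_pow,
    mul_ite, mul_one, mul_zero]
  rw [Finset.sum_ite_eq (Finset.range K) m (fun e => (PowerSeries.coeff e) g)]
  simp [Finset.mem_range.mpr hm]

/-- The ideal of leading coefficients in degree `n` of an ideal of power series. -/
def leadCoeffIdeal (I : Ideal R⟦X⟧) (n : ℕ) : Ideal R where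
  carrier := {a | ∃ f, f ∈ I ∧ (∀ i < n, (PowerSeries.coeff i) f = 0) ∧ (PowerSeries.coeff n) f = a}
  zero_mem' := ⟨0, I.zero_mem, by simp, by simp⟩
  add_mem' := by
    rintro a b ⟨f, hf, hf1, hf2⟩ ⟨g, hg, hg1, hg2⟩
    exact ⟨f + g, I.add_mem hf hg, fun i hi => by simp [hf1 i hi, hg1 i hi],
      by simp [hf2, hg2]⟩
  smul_mem' := by
    rintro r a ⟨f, hf, hf1, hf2⟩
    exact ⟨PowerSeries.C r * f, I.mul_mem_left _ hf,
      fun i hi => by simp [PowerSeries.coeff_C_mul, hf1 i hi],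
      by simp [PowerSeries.coeff_C_mul, hf2]⟩

lemma mem_leadCoeffIdeal {I : Ideal R⟦X⟧} {n : ℕ} {a : R} :
    a ∈ leadCoeffIdeal I n ↔
      ∃ f, f ∈ I ∧ (∀ i < n, (PowerSeries.coeff i) f = 0) ∧ (PowerSeries.coeff n) f = a :=
  Iff.rfl

lemma leadCoeffIdeal_mono (I : Ideal R⟦X⟧) : Monotone (leadCoeffIdeal I) := by
  have key : ∀ n, leadCoeffIdeal I n ≤ leadCoeffIdeal I (n + 1) := by
    intro n a ha
    obtain ⟨f, hf, hf1, hf2⟩ := ha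
    refine ⟨X * f, I.mul_mem_left _ hf, ?_, ?_⟩
    · intro i hi
      cases i with
      | zero => simp
      | succ j =>
        rw [PowerSeries.coeff_succ_X_mul]
        exact hf1 j (by omega)
    · rw [PowerSeries.coeff_succ_X_mul]; exact hf2
  intro a b hab
  induction b with
  | zero => simpa [Nat.le_zero.mp hab] using le_refl _
  | succ b ih =>
    rcases Nat.lt_or_ge a (b+1) with h | h
    · exact (ih (by omega)).trans (key b)
    · have : a = b + 1 := by omega
      simp [this]

theorem powerSeries_isNoetherianRing [IsNoetherianRing R] : IsNoetherianRing (R⟦X⟧) := by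
  rw [isNoetherianRing_iff_ideal_fg]
  intro I
  classical
  -- stabilize the chain of leading coefficient ideals
  obtain ⟨N, hN⟩ := monotone_stabilizes_iff_noetherian.mpr inferInstance
    ⟨leadCoeffIdeal I, leadCoeffIdeal_mono I⟩
  simp only [OrderHom.coe_mk] at hN
  -- generators of each level
  have hfg : ∀ n : ℕ, (leadCoeffIdeal I n).FG := fun n => IsNoetherian.noetherian _
  choose s hs using hfg
  -- witnesses
  let w : ℕ → R → R⟦X⟧ := fun n a =>
    if h : a ∈ leadCoeffIdeal I n then h.choose else 0
  have hw : ∀ n (a : R), a ∈ leadCoeffIdeal I n →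
      w n a ∈ I ∧ (∀ i < n, (PowerSeries.coeff i) (w n a) = 0) ∧
        (PowerSeries.coeff n) (w n a) = a := by
    intro n a h
    have := h.choose_spec
    simpa only [w, dif_pos h] using this
  have hsJ : ∀ n, (↑(s n) : Set R) ⊆ leadCoeffIdeal I n := by
    intro n a ha
    rw [← hs n]; exact Ideal.subset_span ha
  -- the finite generating set
  let S : Finset R⟦X⟧ := (Finset.range (N + 1)).biUnion fun n => (s n).image (w n)
  have hSI : (↑S : Set R⟦X⟧) ⊆ I := by
    intro g hg
    simp only [S, Finset.coe_biUnion, Finset.mem_coe, Finset.mem_biUnion, Finset.mem_image,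
      Set.mem_iUnion, exists_prop] at hg
    obtain ⟨n, _, a, ha, rfl⟩ := hg
    exact (hw n a (hsJ n ha)).1
  have hwS : ∀ n, n ≤ N → ∀ a ∈ s n, w n a ∈ (↑S : Set R⟦X⟧) := by
    intro n hn a ha
    simp only [S, Finset.coe_biUnion, Finset.mem_coe, Finset.mem_biUnion, Finset.mem_image,
      Set.mem_iUnion, exists_prop]
    exact ⟨n, Finset.mem_range.mpr (by omega), a, ha, rfl⟩
  refine ⟨S, le_antisymm (Ideal.span_le.mpr hSI) ?_⟩
  -- Stage 1 : clear coefficients below N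
  have stage1 : ∀ t : ℕ, ∀ f, f ∈ I → (∀ i < N - t, (PowerSeries.coeff i) f = 0) →
      ∃ g ∈ Ideal.span (↑S : Set R⟦X⟧), (f - g) ∈ I ∧
        ∀ i < N, (PowerSeries.coeff i) (f - g) = 0 := by
    intro t
    induction t with
    | zero =>
      intro f hf h0
      exact ⟨0, Ideal.zero_mem _, by simpa using hf, by simpa using h0⟩
    | succ t ih =>
      intro f hf h0
      rcases Nat.lt_or_ge t N with htN | htN
      · -- d := N - (t+1) < N
        set d := N - (t + 1) with hd
        have hdN : d < N := by omega
        have had : (PowerSeries.coeff d) f ∈ leadCoeffIdeal I d :=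
          ⟨f, hf, fun i hi => h0 i (by omega), rfl⟩
        rw [← hs d] at had
        obtain ⟨r, -, hr⟩ := Submodule.mem_span_finset.mp had
        set u : R⟦X⟧ := ∑ a ∈ s d, PowerSeries.C (r a) * w d a with hu
        have huI : u ∈ I :=
          Ideal.sum_mem _ fun a ha => I.mul_mem_left _ (hw d a (hsJ d ha)).1
        have hcoeffu : ∀ i, i ≤ d → (PowerSeries.coeff i) u =
            ∑ a ∈ s d, r a * (PowerSeries.coeff i) (w d a) := by
          intro i _
          simp [hu, PowerSeries.coeff_C_mul]
        have h0' : ∀ i < N - t, (PowerSeries.coeff i) (f - u) = 0 := by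
          intro i hi
          have hid : i ≤ d := by omega
          rcases Nat.lt_or_ge i d with h1 | h1
          · rw [map_sub, h0 i (by omega), hcoeffu i hid]
            rw [Finset.sum_congr rfl fun a ha => by
              rw [(hw d a (hsJ d ha)).2.1 i h1, mul_zero]]
            simp
          · have hide : i = d := by omega
            have hr' : ∑ a ∈ s d, r a * a = (PowerSeries.coeff d) f := by
              simpa [smul_eq_mul] using hr
            rw [hide, map_sub, hcoeffu d le_rfl,
              Finset.sum_congr rfl fun a ha => by rw [(hw d a (hsJ d ha)).2.2],
              hr', sub_self]
        obtain ⟨g', hg', hfg', hcoeff'⟩ := ih (f - u) (I.sub_mem hf huI) h0'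
        refine ⟨g' + u, ?_, ?_, ?_⟩
        · exact Ideal.add_mem _ hg' (Ideal.sum_mem _ fun a ha =>
            Ideal.mul_mem_left _ _ (Ideal.subset_span (hwS d (by omega) a ha)))
        · have : f - (g' + u) = f - u - g' := by ring
          rw [this]; exact hfg'
        · intro i hi
          have : f - (g' + u) = f - u - g' := by ring
          rw [this]; exact hcoeff' i hi
      · -- t ≥ N : N - (t+1) = N - t, apply ih directly
        obtain ⟨g, hg, h1, h2⟩ := ih f hf (fun i hi => h0 i (by omega))
        exact ⟨g, hg, h1, h2⟩
  -- Stage 2 : elements with coefficients vanishing below N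
  have stage2 : ∀ f, f ∈ I → (∀ i < N, (PowerSeries.coeff i) f = 0) →
      f ∈ Ideal.span (↑S : Set R⟦X⟧) := by
    intro f hf h0
    -- choice of representation coefficients
    let pick : R⟦X⟧ → ℕ → R → R := fun ρ d =>
      if h : (PowerSeries.coeff (N + d)) ρ ∈ Ideal.span (↑(s N) : Set R)
      then (Submodule.mem_span_finset.mp h).choose else fun _ => 0
    -- remainders
    let ρ : ℕ → R⟦X⟧ := fun d => Nat.rec f
      (fun d ρd => ρd - ∑ a ∈ s N, PowerSeries.C (pick ρd d a) * (X ^ d * w N a)) d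
    have hρ0 : ρ 0 = f := rfl
    have hρsucc : ∀ d, ρ (d + 1) =
        ρ d - ∑ a ∈ s N, PowerSeries.C (pick (ρ d) d a) * (X ^ d * w N a) := fun d => rfl
    -- order of X^d * w N a
    have hXw : ∀ (a : R), a ∈ s N → ∀ d i, i < N + d →
        (PowerSeries.coeff i) (X ^ d * w N a) = 0 := by
      intro a ha d i hi
      have h1 : (X : R⟦X⟧) ^ N ∣ w N a := by
        rw [PowerSeries.X_pow_dvd_iff]
        exact fun m hm => (hw N a (hsJ N ha)).2.1 m hm
      have h2 : (X : R⟦X⟧) ^ (N + d) ∣ X ^ d * w N a := by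
        obtain ⟨q, hq⟩ := h1
        exact ⟨q, by rw [hq, pow_add]; ring⟩
      rw [PowerSeries.X_pow_dvd_iff] at h2
      exact h2 i hi
    have hXwN : ∀ (a : R), a ∈ s N → ∀ d,
        (PowerSeries.coeff (N + d)) (X ^ d * w N a) = a := by
      intro a ha d
      rw [PowerSeries.coeff_X_pow_mul]
      exact (hw N a (hsJ N ha)).2.2
    -- the invariant
    have inv : ∀ d, ρ d ∈ I ∧ ∀ i < N + d, (PowerSeries.coeff i) (ρ d) = 0 := by
      intro d
      induction d with
      | zero => exact ⟨hf, fun i hi => h0 i (by omega)⟩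
      | succ d ih =>
        obtain ⟨hI, hc⟩ := ih
        have hmem : (PowerSeries.coeff (N + d)) (ρ d) ∈ Ideal.span (↑(s N) : Set R) := by
          rw [hs N, hN (N + d) (by omega)]
          exact ⟨ρ d, hI, fun i hi => hc i hi, rfl⟩
        have hpick : ∑ a ∈ s N, pick (ρ d) d a • a = (PowerSeries.coeff (N + d)) (ρ d) := by
          have := (Submodule.mem_span_finset.mp hmem).choose_spec.2
          simpa only [pick, dif_pos hmem] using this
        constructor
        · rw [hρsucc d]
          exact I.sub_mem hI (Ideal.sum_mem _ fun a ha =>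
            I.mul_mem_left _ (I.mul_mem_left _ (hw N a (hsJ N ha)).1))
        · intro i hi
          rw [hρsucc d, map_sub, map_sum]
          rcases Nat.lt_or_ge i (N + d) with h1 | h1
          · rw [hc i h1]
            rw [Finset.sum_congr rfl fun a ha => by
              rw [PowerSeries.coeff_C_mul, hXw a ha d i h1, mul_zero]]
            simp
          · have hieq : i = N + d := by omega
            subst hieq
            rw [Finset.sum_congr rfl fun a ha => by
              rw [PowerSeries.coeff_C_mul, hXwN a ha d]]
            rw [← hpick]
            simp [smul_eq_mul]
    -- closed formula for the remainders
    have hρformula : ∀ d, ρ d = f - ∑ a ∈ s N,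
        (∑ e ∈ Finset.range d, PowerSeries.C (pick (ρ e) e a) * X ^ e) * w N a := by
      intro d
      induction d with
      | zero => simp [hρ0]
      | succ d ih =>
        have hsplit : ∑ a ∈ s N,
            (∑ e ∈ Finset.range (d + 1), PowerSeries.C (pick (ρ e) e a) * X ^ e) * w N a =
            (∑ a ∈ s N, (∑ e ∈ Finset.range d, PowerSeries.C (pick (ρ e) e a) * X ^ e) * w N a)
              + ∑ a ∈ s N, PowerSeries.C (pick (ρ d) d a) * (X ^ d * w N a) := by
          rw [← Finset.sum_add_distrib]
          exact Finset.sum_congr rfl fun a _ => by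
            rw [Finset.sum_range_succ, add_mul, mul_assoc]
        rw [hρsucc d, hsplit, ih]
        ring
    -- the multiplier series
    set g : R → R⟦X⟧ := fun a => PowerSeries.mk fun e => pick (ρ e) e a with hg
    have key : f = ∑ a ∈ s N, g a * w N a := by
      ext K
      have hdvd : ∀ a ∈ s N, (X : R⟦X⟧) ^ (K + 1) ∣
          (g a - ∑ e ∈ Finset.range (K + 1), PowerSeries.C (pick (ρ e) e a) * X ^ e) := by
        intro a _
        have := ps_trunc_dvd (g a) (K + 1)
        simpa only [hg, PowerSeries.coeff_mk] using this
      have hcoeff_eq : ∀ a ∈ s N, (PowerSeries.coeff K) (g a * w N a) =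
          (PowerSeries.coeff K)
            ((∑ e ∈ Finset.range (K + 1), PowerSeries.C (pick (ρ e) e a) * X ^ e) * w N a) := by
        intro a ha
        obtain ⟨q, hq⟩ := hdvd a ha
        have : g a * w N a -
            (∑ e ∈ Finset.range (K + 1), PowerSeries.C (pick (ρ e) e a) * X ^ e) * w N a =
            X ^ (K + 1) * (q * w N a) := by
          rw [← sub_mul, hq]; ring
        have h0' : (PowerSeries.coeff K) (X ^ (K + 1) * (q * w N a)) = 0 := by
          have : (X : R⟦X⟧) ^ (K + 1) ∣ X ^ (K + 1) * (q * w N a) := ⟨q * w N a, rfl⟩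
          rw [PowerSeries.X_pow_dvd_iff] at this
          exact this K (by omega)
        have h2 := congrArg (PowerSeries.coeff K) this
        rw [map_sub, h0'] at h2
        exact sub_eq_zero.mp h2
      have hsum : ∑ a ∈ s N,
          (∑ e ∈ Finset.range (K + 1), PowerSeries.C (pick (ρ e) e a) * X ^ e) * w N a
          = f - ρ (K + 1) := by
        rw [hρformula (K + 1)]; ring
      rw [map_sum, Finset.sum_congr rfl hcoeff_eq, ← map_sum, hsum, map_sub,
        (inv (K + 1)).2 K (by omega), sub_zero]
    rw [key]
    exact Ideal.sum_mem _ fun a ha =>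
      Ideal.mul_mem_left _ _ (Ideal.subset_span (hwS N le_rfl a ha))
  -- combine
  intro f hf
  obtain ⟨g, hg, hfgI, hcoeff⟩ := stage1 N f hf (by simp)
  have hfg : f = (f - g) + g := by ring
  rw [hfg]
  exact Ideal.add_mem _ (stage2 (f - g) hfgI hcoeff) hg

end Noetherian

open PowerSeries in
/-- `ω_n = (1+X)^(ℓ^n) - 1` in the Iwasawa algebra `Λ = ℤ_ℓ[[X]]`. -/
noncomputable def omegaIw (ℓ : ℕ) [Fact ℓ.Prime] (n : ℕ) : PowerSeries ℤ_[ℓ] :=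
  (1 + PowerSeries.X) ^ ℓ ^ n - 1

/-- `ν_{m,n} = ∑_{j<ℓ^(m-n)} (1+X)^(j·ℓ^n)` in `Λ = ℤ_ℓ[[X]]`, so that `ω_m = ν_{m,n}·ω_n`. -/
noncomputable def nuIw (ℓ : ℕ) [Fact ℓ.Prime] (n m : ℕ) : PowerSeries ℤ_[ℓ] :=
  ∑ j ∈ Finset.range (ℓ ^ (m - n)), (1 + PowerSeries.X) ^ (j * ℓ ^ n)

/-- The submodule `ω_n X` of a `Λ`-module `X`. -/
noncomputable def omegaSub (ℓ : ℕ) [Fact ℓ.Prime] (n : ℕ)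
    (X : Type*) [AddCommGroup X] [Module (PowerSeries ℤ_[ℓ]) X] :
    Submodule (PowerSeries ℤ_[ℓ]) X :=
  LinearMap.range (LinearMap.lsmul (PowerSeries ℤ_[ℓ]) X (omegaIw ℓ n))

section OmegaNu

open PowerSeries

variable (ℓ : ℕ) [Fact ℓ.Prime]

local notation "Λ" => PowerSeries ℤ_[ℓ]

lemma omegaIw_factor {n m : ℕ} (h : n ≤ m) :
    omegaIw ℓ m = nuIw ℓ n m * omegaIw ℓ n := by
  have h1 : ((1 + X : Λ) ^ ℓ ^ n) ^ ℓ ^ (m - n) = (1 + X) ^ ℓ ^ m := by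
    rw [← pow_mul, ← pow_add, Nat.add_sub_cancel' h]
  have h2 : nuIw ℓ n m = ∑ j ∈ Finset.range (ℓ ^ (m - n)), ((1 + X : Λ) ^ ℓ ^ n) ^ j :=
    Finset.sum_congr rfl fun j _ => by rw [← pow_mul, mul_comm]
  rw [omegaIw, ← h1, ← geom_sum_mul, h2, omegaIw]

lemma nuIw_eq_const_add (n m : ℕ) :
    ∃ h : Λ, nuIw ℓ n m = ((ℓ : Λ)) ^ (m - n) + h * omegaIw ℓ n := by
  refine ⟨∑ j ∈ Finset.range (ℓ ^ (m - n)), ∑ i ∈ Finset.range j, ((1 + X : Λ) ^ ℓ ^ n) ^ i, ?_⟩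
  rw [Finset.sum_mul]
  have key : ∀ j : ℕ, (∑ i ∈ Finset.range j, ((1 + X : Λ) ^ ℓ ^ n) ^ i) * omegaIw ℓ n =
      (1 + X : Λ) ^ (j * ℓ ^ n) - 1 := by
    intro j
    rw [omegaIw, geom_sum_mul, ← pow_mul, mul_comm]
  rw [Finset.sum_congr rfl fun j _ => key j, Finset.sum_sub_distrib]
  simp only [nuIw, Finset.sum_const, Finset.card_range, nsmul_eq_mul, mul_one]
  rw [Nat.cast_pow]
  ring

lemma one_add_X_pow_eq (n : ℕ) :
    ∃ g : Λ, (1 + X : Λ) ^ ℓ ^ n = 1 + X ^ ℓ ^ n + (ℓ : Λ) * g := by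
  obtain ⟨r, hr⟩ := exists_add_pow_prime_pow_eq (Fact.out : ℓ.Prime) (1 : Λ) X n
  exact ⟨X * r, by rw [hr]; ring⟩

lemma omegaIw_eq (n : ℕ) :
    ∃ g : Λ, omegaIw ℓ n = X ^ ℓ ^ n + (ℓ : Λ) * g := by
  obtain ⟨g, hg⟩ := one_add_X_pow_eq ℓ n
  exact ⟨g, by rw [omegaIw, hg]; ring⟩

lemma omegaIw_ne_zero (n : ℕ) : omegaIw ℓ n ≠ 0 := by
  obtain ⟨g, hg⟩ := omegaIw_eq ℓ n
  intro h0
  rw [h0] at hg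
  have hC : ((ℓ : ℕ) : Λ) = C ((ℓ : ℕ) : ℤ_[ℓ]) := (map_natCast (C (R := ℤ_[ℓ])) ℓ).symm
  rw [hC] at hg
  have h1 := congrArg (coeff (ℓ ^ n)) hg
  rw [map_zero, map_add, PowerSeries.coeff_C_mul, PowerSeries.coeff_X_pow, if_pos rfl] at h1
  set c := (coeff (ℓ ^ n)) g
  have h2 : (1 : ℤ_[ℓ]) = -((ℓ : ℤ_[ℓ]) * c) := by linear_combination -h1
  have h3 : ‖(1 : ℤ_[ℓ])‖ ≤ ‖((ℓ : ℕ) : ℤ_[ℓ])‖ * 1 := by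
    rw [h2, norm_neg, norm_mul]
    exact mul_le_mul_of_nonneg_left (PadicInt.norm_le_one _) (norm_nonneg _)
  rw [norm_one, mul_one, PadicInt.norm_p] at h3
  have hp : (1 : ℝ) < (ℓ : ℝ) := by
    exact_mod_cast (Fact.out : ℓ.Prime).one_lt
  have : (ℓ : ℝ)⁻¹ < 1 := by
    rw [inv_lt_one_iff₀]; right; exact hp
  linarith

lemma nuIw_trans {n k m : ℕ} (h1 : n ≤ k) (h2 : k ≤ m) :
    nuIw ℓ n m = nuIw ℓ k m * nuIw ℓ n k := by
  have e1 := omegaIw_factor ℓ (h1.trans h2)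
  have e2 := omegaIw_factor ℓ h2
  have e3 := omegaIw_factor ℓ h1
  apply mul_right_cancel₀ (omegaIw_ne_zero ℓ n)
  rw [← e1, mul_assoc, ← e3, ← e2]

end OmegaNu

section ModuleLemmas

open PowerSeries

variable (ℓ : ℕ) [Fact ℓ.Prime]

local notation "Λ" => PowerSeries ℤ_[ℓ]

variable {M : Type*} [AddCommGroup M] [Module (PowerSeries ℤ_[ℓ]) M]

lemma pow_smul_congr (a b : Λ) (z : M) (h : a • z = b • z) :
    ∀ c : ℕ, a ^ c • z = b ^ c • z := by
  intro c
  induction c with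
  | zero => rfl
  | succ c ih =>
    rw [pow_succ, pow_succ, mul_smul, mul_smul, h, ← mul_smul, ← mul_smul,
      mul_comm (a ^ c) b, mul_comm (b ^ c) b, mul_smul, mul_smul, ih]

lemma smul_eq_of_sub_smul_eq_zero {a b : Λ} {z : M} (h : (a - b) • z = 0) :
    a • z = b • z := by
  rw [sub_smul, sub_eq_zero] at h; exact h

/-- A cyclic module killed by `ℓ^c` and `X^k` is finite. -/
lemma cyclic_smul_finite (c k : ℕ) (z : M)
    (hc : ((ℓ : Λ)) ^ c • z = 0) (hk : (X : Λ) ^ k • z = 0) :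
    (Set.range fun r : Λ => r • z).Finite := by
  classical
  set φ : (Fin k → Fin (ℓ ^ c)) → M := fun b =>
    (∑ j : Fin k, C (((b j : ℕ) : ℤ_[ℓ])) * X ^ (j : ℕ)) • z with hφ
  apply Set.Finite.subset (Set.finite_range φ)
  rintro _ ⟨r, rfl⟩
  refine ⟨fun j => ⟨((coeff (j : ℕ)) r).appr c, PadicInt.appr_lt _ _⟩, ?_⟩
  -- step 1 : truncate r
  have step1 : r • z = (∑ j ∈ Finset.range k, C ((coeff j) r) * X ^ j) • z := by
    apply (smul_eq_of_sub_smul_eq_zero ℓ ?_).symm.symm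
    obtain ⟨q, hq⟩ := ps_trunc_dvd r k
    have h2 : r - ∑ j ∈ Finset.range k, C ((coeff j) r) * X ^ j = q * X ^ k := by
      rw [hq]; ring
    rw [h2, mul_smul, hk, smul_zero]
  -- step 2 : reduce the coefficients mod ℓ^c
  have step2 : (∑ j ∈ Finset.range k, C ((coeff j) r) * X ^ j) • z =
      (∑ j ∈ Finset.range k,
        C ((((coeff j) r).appr c : ℤ_[ℓ])) * X ^ j) • z := by
    rw [Finset.sum_smul, Finset.sum_smul]
    refine Finset.sum_congr rfl fun j _ => ?_
    apply smul_eq_of_sub_smul_eq_zero ℓ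
    obtain ⟨d, hd⟩ := Ideal.mem_span_singleton'.mp
      (PadicInt.appr_spec c ((coeff j) r))
    have hsub : C ((coeff j) r) * X ^ j -
        C ((((coeff j) r).appr c : ℤ_[ℓ])) * X ^ j =
        (C d * X ^ j) * ((ℓ : Λ)) ^ c := by
      have : ((ℓ : ℕ) : Λ) ^ c = C (((ℓ : ℕ) : ℤ_[ℓ]) ^ c) := by
        rw [map_pow, map_natCast]
      rw [this, ← sub_mul, ← map_sub, ← hd, map_mul]
      ring
    rw [hsub, mul_smul, hc, smul_zero]
  show (∑ j : Fin k,
      C (((((coeff (j : ℕ)) r).appr c : ℕ)) : ℤ_[ℓ]) * X ^ (j : ℕ)) • z = r • z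
  rw [step1, step2,
    Finset.sum_range (fun j => C ((((coeff j) r).appr c : ℤ_[ℓ])) * X ^ j)]

/-- Pigeonhole: on an element of a finite submodule, a suitable power of a scalar acts as zero. -/
lemma exists_pow_smul_eq_zero {T : Submodule Λ M} (hT : (T : Set M).Finite)
    (u : Λ) (hu : ∀ d : ℕ, 0 < d → IsUnit (1 - u ^ d)) {t : M} (ht : t ∈ T) :
    ∃ c, u ^ c • t = 0 := by
  haveI := hT.to_subtype
  obtain ⟨a, b, hab, heq⟩ := Finite.exists_ne_map_eq_of_infinite
    (fun i : ℕ => (⟨u ^ i • t, T.smul_mem _ ht⟩ : (T : Set M)))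
  have heq' : u ^ a • t = u ^ b • t := congrArg Subtype.val heq
  -- wlog a < b
  have main : ∀ a b : ℕ, a < b → u ^ a • t = u ^ b • t → ∃ c, u ^ c • t = 0 := by
    intro a b hlt he
    obtain ⟨v, hv⟩ := hu (b - a) (by omega)
    have hzero : u ^ a • ((1 - u ^ (b - a)) • t) = 0 := by
      rw [sub_smul, one_smul, smul_sub, ← mul_smul, ← pow_add,
        Nat.add_sub_cancel' hlt.le, ← he, sub_self]
    refine ⟨a, ?_⟩
    have h4 : u ^ a • ((↑v : Λ) • t) = 0 := by rw [hv]; exact hzero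
    have hvt : t = (↑v⁻¹ : Λ) • ((↑v : Λ) • t) := by
      rw [← mul_smul, Units.inv_mul, one_smul]
    rw [hvt, ← mul_smul, mul_comm, mul_smul, h4, smul_zero]
  rcases Nat.lt_or_ge a b with h | h
  · exact main a b h heq'
  · exact main b a (by omega) heq'.symm

lemma exists_uniform_pow_smul_eq_zero {T : Submodule Λ M} (hT : (T : Set M).Finite)
    (u : Λ) (hu : ∀ d : ℕ, 0 < d → IsUnit (1 - u ^ d)) :
    ∃ c, ∀ t ∈ T, u ^ c • t = 0 := by
  classical
  have hch : ∀ t : (T : Set M), ∃ c, u ^ c • (t : M) = 0 :=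
    fun t => exists_pow_smul_eq_zero ℓ hT u hu t.2
  choose f hf using hch
  haveI := hT.to_subtype
  obtain ⟨Cb, hCb⟩ := (Set.finite_range f).bddAbove
  refine ⟨Cb, fun t ht => ?_⟩
  have h1 : f ⟨t, ht⟩ ≤ Cb := hCb (Set.mem_range_self _)
  have h2 : u ^ Cb = u ^ (Cb - f ⟨t, ht⟩) * u ^ (f ⟨t, ht⟩) := by
    rw [← pow_add, Nat.sub_add_cancel h1]
  rw [h2, mul_smul, hf ⟨t, ht⟩, smul_zero]

lemma isUnit_one_sub_ell_pow (d : ℕ) (hd : 0 < d) : IsUnit (1 - ((ℓ : Λ)) ^ d) := by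
  have h1 : (1 - ((ℓ : Λ)) ^ d) = C (1 - ((ℓ : ℕ) : ℤ_[ℓ]) ^ d) := by
    rw [map_sub, map_one, map_pow, map_natCast]
  rw [h1]
  apply IsUnit.map
  have hnorm : ‖((ℓ : ℕ) : ℤ_[ℓ]) ^ d‖ < 1 := by
    rw [PadicInt.norm_p_pow]
    have hp : (1 : ℝ) < (ℓ : ℝ) := by exact_mod_cast (Fact.out : ℓ.Prime).one_lt
    calc (ℓ : ℝ) ^ (-(d : ℤ)) = ((ℓ : ℝ) ^ (d : ℕ))⁻¹ := by
          rw [zpow_neg, zpow_natCast]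
      _ < 1 := by
          rw [inv_lt_one_iff₀]; right
          exact one_lt_pow₀ hp (by omega)
  by_contra h
  have h2 : ‖(1 : ℤ_[ℓ]) - ((ℓ : ℕ) : ℤ_[ℓ]) ^ d‖ < 1 :=
    PadicInt.mem_nonunits.mp (mem_nonunits_iff.mpr h)
  have h3 := PadicInt.nonarchimedean ((1 : ℤ_[ℓ]) - ((ℓ : ℕ) : ℤ_[ℓ]) ^ d) (((ℓ : ℕ) : ℤ_[ℓ]) ^ d)
  rw [sub_add_cancel, norm_one] at h3
  have h5 : max ‖(1 : ℤ_[ℓ]) - ((ℓ : ℕ) : ℤ_[ℓ]) ^ d‖ ‖((ℓ : ℕ) : ℤ_[ℓ]) ^ d‖ < 1 :=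
    max_lt h2 hnorm
  linarith

lemma isUnit_one_sub_X_pow (d : ℕ) (hd : 0 < d) : IsUnit (1 - (X : Λ) ^ d) := by
  rw [PowerSeries.isUnit_iff_constantCoeff]
  rw [map_sub, map_one, map_pow, PowerSeries.constantCoeff_X, zero_pow (by omega), sub_zero]
  exact isUnit_one

end ModuleLemmas

section Annihilation

open PowerSeries

variable (ℓ : ℕ) [Fact ℓ.Prime]

local notation "Λ" => PowerSeries ℤ_[ℓ]

variable {M : Type*} [AddCommGroup M] [Module (PowerSeries ℤ_[ℓ]) M]

lemma omegaIw_smul_eq_zero {t : M} {c k : ℕ}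
    (hc : ((ℓ : Λ)) ^ c • t = 0) (hk : (X : Λ) ^ k • t = 0)
    {n : ℕ} (hn : k + c ≤ n) : omegaIw ℓ n • t = 0 := by
  rcases Nat.eq_zero_or_pos c with hc0 | hc0
  · have ht : t = 0 := by simpa [hc0] using hc
    rw [ht, smul_zero]
  obtain ⟨g, hg⟩ := omegaIw_eq ℓ k
  have hbase : omegaIw ℓ k • t = ((ℓ : Λ) * g) • t := by
    rw [hg, add_smul]
    have hXk : ((X : Λ) ^ ℓ ^ k) • t = 0 := by
      have hkk : k ≤ ℓ ^ k := (Nat.lt_pow_self (n := k) (Fact.out : ℓ.Prime).one_lt).le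
      rw [← Nat.sub_add_cancel hkk, pow_add, mul_smul, hk, smul_zero]
    rw [hXk, zero_add]
  have hstep : ∀ i : ℕ, ∃ w : Λ, omegaIw ℓ (k + i) • t = (((ℓ : Λ)) ^ (i + 1) * w) • t := by
    intro i
    induction i with
    | zero => exact ⟨g, by simpa using hbase⟩
    | succ i ih =>
      obtain ⟨w, hw⟩ := ih
      obtain ⟨h, hh⟩ := nuIw_eq_const_add ℓ (k + i) (k + i + 1)
      have hν : nuIw ℓ (k + i) (k + i + 1) = (ℓ : Λ) + h * omegaIw ℓ (k + i) := by
        have h1 : k + i + 1 - (k + i) = 1 := by omega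
        rw [h1, pow_one] at hh
        exact hh
      have hfac : omegaIw ℓ (k + i + 1) = nuIw ℓ (k + i) (k + i + 1) * omegaIw ℓ (k + i) :=
        omegaIw_factor ℓ (by omega)
      refine ⟨w + (ℓ : Λ) ^ i * (h * w * w), ?_⟩
      have hni : k + (i + 1) = k + i + 1 := by omega
      rw [hni, hfac, hν, add_mul, add_smul]
      have e1 : ((ℓ : Λ) * omegaIw ℓ (k + i)) • t = ((ℓ : Λ) * ((ℓ : Λ) ^ (i + 1) * w)) • t := by
        rw [mul_smul, hw, ← mul_smul]
      have e2 : (h * omegaIw ℓ (k + i) * omegaIw ℓ (k + i)) • t =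
          (h * ((ℓ : Λ) ^ (i + 1) * w) * ((ℓ : Λ) ^ (i + 1) * w)) • t := by
        rw [mul_smul, hw, ← mul_smul]
        have hcomm : h * omegaIw ℓ (k + i) * ((ℓ : Λ) ^ (i + 1) * w) =
            h * ((ℓ : Λ) ^ (i + 1) * w) * omegaIw ℓ (k + i) := by ring
        rw [hcomm, mul_smul, hw, ← mul_smul]
      rw [e1, e2, ← add_smul]
      have hs : (ℓ : Λ) * ((ℓ : Λ) ^ (i + 1) * w) +
          h * ((ℓ : Λ) ^ (i + 1) * w) * ((ℓ : Λ) ^ (i + 1) * w) =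
          (ℓ : Λ) ^ (i + 1 + 1) * (w + (ℓ : Λ) ^ i * (h * w * w)) := by ring
      rw [hs]
  obtain ⟨w, hw⟩ := hstep (c - 1)
  have hc1 : c - 1 + 1 = c := by omega
  rw [hc1] at hw
  have hzero : omegaIw ℓ (k + (c - 1)) • t = 0 := by
    rw [hw, mul_comm, mul_smul, hc, smul_zero]
  have hfac : omegaIw ℓ n = nuIw ℓ (k + (c - 1)) n * omegaIw ℓ (k + (c - 1)) :=
    omegaIw_factor ℓ (by omega)
  rw [hfac, mul_smul, hzero, smul_zero]

lemma nuIw_smul_eq_zero {t : M} {C n m : ℕ}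
    (hc : ((ℓ : Λ)) ^ C • t = 0) (homega : omegaIw ℓ n • t = 0)
    (hm : n + C ≤ m) : nuIw ℓ n m • t = 0 := by
  obtain ⟨h, hh⟩ := nuIw_eq_const_add ℓ n m
  rw [hh, add_smul, mul_smul, homega, smul_zero, add_zero]
  have h1 : m - n = (m - n - C) + C := by omega
  rw [h1, pow_add, mul_smul, hc, smul_zero]

end Annihilation

/-- Let `X` be a finitely generated module over `Λ = ℤ_ℓ[[X]]` and `T` its
largest finite `Λ`-submodule.  Then for all `n ≥ N` and `m ≥ M(n)`, the kernel of the map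
`X/ω_n X → X/ω_m X` induced by multiplication by `ν_{m,n}` is exactly `(T + ω_n X)/ω_n X`;
elementwise: the class of `x` lies in the kernel (i.e. `ν_{m,n}·x ∈ ω_m X`) iff
`x ∈ T + ω_n X`. -/
theorem capitulation_kernel_eq_largest_finite_submodule
    (ℓ : ℕ) [Fact ℓ.Prime]
    (X : Type*) [AddCommGroup X] [Module (PowerSeries ℤ_[ℓ]) X]
    [Module.Finite (PowerSeries ℤ_[ℓ]) X]
    (T : Submodule (PowerSeries ℤ_[ℓ]) X) (hTfin : (T : Set X).Finite)
    (hTmax : ∀ S : Submodule (PowerSeries ℤ_[ℓ]) X, (S : Set X).Finite → S ≤ T) :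
    ∃ N : ℕ, ∀ n, N ≤ n → ∃ M, n ≤ M ∧ ∀ m, M ≤ m → ∀ x : X,
      (nuIw ℓ n m • x ∈ omegaSub ℓ m X) ↔ x ∈ T ⊔ omegaSub ℓ n X := by
  classical
  haveI : IsNoetherianRing ℤ_[ℓ] := PrincipalIdealRing.isNoetherianRing
  haveI : IsNoetherianRing (PowerSeries ℤ_[ℓ]) := powerSeries_isNoetherianRing
  haveI : IsNoetherian (PowerSeries ℤ_[ℓ]) X := isNoetherian_of_isNoetherianRing_of_finite _ _
  obtain ⟨C, hC⟩ := exists_uniform_pow_smul_eq_zero ℓ hTfin (((ℓ : ℕ) : PowerSeries ℤ_[ℓ]))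
    (isUnit_one_sub_ell_pow ℓ)
  obtain ⟨K, hK⟩ := exists_uniform_pow_smul_eq_zero ℓ hTfin (PowerSeries.X)
    (isUnit_one_sub_X_pow ℓ)
  set Kchain : ℕ →o Submodule (PowerSeries ℤ_[ℓ]) X :=
    ⟨fun mm => LinearMap.ker (LinearMap.lsmul (PowerSeries ℤ_[ℓ]) X (omegaIw ℓ mm)), by
      intro a b hab x hx
      rw [LinearMap.mem_ker, LinearMap.lsmul_apply] at hx ⊢
      rw [omegaIw_factor ℓ hab, mul_smul, hx, smul_zero]⟩ with hKchain
  obtain ⟨M₀, hM₀⟩ := monotone_stabilizes_iff_noetherian.mpr inferInstance Kchain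
  refine ⟨max M₀ (K + C), fun n hn => ⟨n + C, by omega, fun m hm x => ?_⟩⟩
  have hM₀n : M₀ ≤ n := le_trans (le_max_left _ _) hn
  have hKC : K + C ≤ n := le_trans (le_max_right _ _) hn
  have hnm : n ≤ m := by omega
  have hTomega : ∀ t ∈ T, omegaIw ℓ n • t = 0 := fun t ht =>
    omegaIw_smul_eq_zero ℓ (hC t ht) (hK t ht) hKC
  have hTnu : ∀ t ∈ T, nuIw ℓ n m • t = 0 := fun t ht =>
    nuIw_smul_eq_zero ℓ (hC t ht) (hTomega t ht) (by omega)
  constructor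
  · intro hmem
    rw [omegaSub, LinearMap.mem_range] at hmem
    obtain ⟨y, hy⟩ := hmem
    rw [LinearMap.lsmul_apply] at hy
    set z := x - omegaIw ℓ n • y with hz
    have hνz : nuIw ℓ n m • z = 0 := by
      rw [hz, smul_sub, ← mul_smul, ← omegaIw_factor ℓ hnm, hy, sub_self]
    have hωm : omegaIw ℓ m • z = 0 := by
      rw [omegaIw_factor ℓ hnm, mul_comm, mul_smul, hνz, smul_zero]
    have hker : omegaIw ℓ M₀ • z = 0 := by
      have h1 : z ∈ Kchain m := by
        show z ∈ LinearMap.ker (LinearMap.lsmul (PowerSeries ℤ_[ℓ]) X (omegaIw ℓ m))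
        rw [LinearMap.mem_ker, LinearMap.lsmul_apply]
        exact hωm
      rw [← hM₀ m (by omega)] at h1
      have h2 : z ∈ LinearMap.ker (LinearMap.lsmul (PowerSeries ℤ_[ℓ]) X (omegaIw ℓ M₀)) := h1
      rw [LinearMap.mem_ker, LinearMap.lsmul_apply] at h2
      exact h2
    have hωn : omegaIw ℓ n • z = 0 := by
      rw [omegaIw_factor ℓ hM₀n, mul_smul, hker, smul_zero]
    have hℓz : (((ℓ : ℕ) : PowerSeries ℤ_[ℓ])) ^ (m - n) • z = 0 := by
      obtain ⟨h, hh⟩ := nuIw_eq_const_add ℓ n m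
      have h3 := hνz
      rw [hh, add_smul, mul_smul, hωn, smul_zero, add_zero] at h3
      exact h3
    obtain ⟨g, hg⟩ := omegaIw_eq ℓ n
    have hXz : (PowerSeries.X : PowerSeries ℤ_[ℓ]) ^ (ℓ ^ n * (m - n)) • z = 0 := by
      have hXω : (PowerSeries.X : PowerSeries ℤ_[ℓ]) ^ (ℓ ^ n) • z =
          (-(((ℓ : ℕ) : PowerSeries ℤ_[ℓ]) * g)) • z := by
        have h4 := hωn
        rw [hg, add_smul] at h4
        rw [neg_smul, eq_neg_iff_add_eq_zero]
        exact h4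
      have hpow := pow_smul_congr ℓ _ _ z hXω (m - n)
      rw [← pow_mul] at hpow
      rw [hpow]
      have hexp : (-(((ℓ : ℕ) : PowerSeries ℤ_[ℓ]) * g)) ^ (m - n) =
          (-1) ^ (m - n) * g ^ (m - n) * (((ℓ : ℕ) : PowerSeries ℤ_[ℓ])) ^ (m - n) := by
        ring
      rw [hexp, mul_smul, hℓz, smul_zero]
    have hfin : ((Submodule.span (PowerSeries ℤ_[ℓ]) {z} : Submodule _ X) : Set X).Finite := by
      apply Set.Finite.subset (cyclic_smul_finite ℓ (m - n) (ℓ ^ n * (m - n)) z hℓz hXz)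
      intro w hw
      rw [SetLike.mem_coe, Submodule.mem_span_singleton] at hw
      obtain ⟨r, rfl⟩ := hw
      exact ⟨r, rfl⟩
    have hzT : z ∈ T := hTmax _ hfin (Submodule.mem_span_singleton_self z)
    rw [Submodule.mem_sup]
    refine ⟨z, hzT, omegaIw ℓ n • y, ?_, ?_⟩
    · rw [omegaSub, LinearMap.mem_range]
      exact ⟨y, LinearMap.lsmul_apply _ _⟩
    · rw [hz, sub_add_cancel]
  · intro hx
    rw [Submodule.mem_sup] at hx
    obtain ⟨t, ht, w, hw, rfl⟩ := hx
    rw [omegaSub, LinearMap.mem_range] at hw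
    obtain ⟨y, hy⟩ := hw
    rw [LinearMap.lsmul_apply] at hy
    rw [omegaSub, LinearMap.mem_range]
    refine ⟨y, ?_⟩
    rw [LinearMap.lsmul_apply]
    rw [smul_add, hTnu t ht, zero_add, ← hy, ← mul_smul, ← omegaIw_factor ℓ hnm]
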